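/- arXiv:1810.08264 — 4 statements merged into one kernel-verified Lean document; each statement's English description precedes it below -/
import Mathlib

section
/- Suppose there exist t > 0 and B̄_n > 0 such that Σ_{k=1}^n E[ ξ_k² e^{t|ξ_k|} ] ≤ B̄_n². Then for every x with 0 < x < B̄_n, P( Σ_{k=1}^n ξ_k > C_t B̄_n x ) ≤ exp(−x²), where C_t = t + t^{−1}. -/
open MeasureTheory ProbabilityTheory


lemma exp_le_one_add_add_sq_half_of_nonpos {y : ℝ} (hy : y ≤ 0) :
    Real.exp y ≤ 1 + y + y ^ 2 / 2 := by
  have hf : ∀ z : ℝ, HasDerivAt (fun w : ℝ => 1 + w + w ^ 2 / 2 - Real.exp w)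
      (1 + z - Real.exp z) z := by
    intro z
    have h1 : HasDerivAt (fun w : ℝ => 1 + w + w ^ 2 / 2) (1 + z) z := by
      have := ((hasDerivAt_id z).const_add (1 : ℝ)).add ((hasDerivAt_pow 2 z).div_const 2)
      exact this.congr_deriv (by push_cast; ring)
    exact h1.sub (Real.hasDerivAt_exp z)
  have hanti : Antitone (fun w : ℝ => 1 + w + w ^ 2 / 2 - Real.exp w) := by
    refine antitone_of_deriv_nonpos (fun z => (hf z).differentiableAt) (fun z => ?_)
    rw [(hf z).deriv]
    have := Real.add_one_le_exp z
    linarith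
  have h0 := hanti hy
  simp only [Real.exp_zero] at h0
  nlinarith [h0]

lemma exp_le_one_add_add_sq_half_mul_exp_abs (y : ℝ) :
    Real.exp y ≤ 1 + y + y ^ 2 / 2 * Real.exp |y| := by
  rcases le_or_gt y 0 with hy | hy
  · have h1 := exp_le_one_add_add_sq_half_of_nonpos hy
    have h2 : (1 : ℝ) ≤ Real.exp |y| := Real.one_le_exp (abs_nonneg y)
    nlinarith [sq_nonneg y]
  · rw [abs_of_pos hy]
    have hg : ∀ z : ℝ, HasDerivAt
        (fun w : ℝ => 1 + w + w ^ 2 / 2 * Real.exp w - Real.exp w)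
        (1 + (z * Real.exp z + z ^ 2 / 2 * Real.exp z) - Real.exp z) z := by
      intro z
      have h1 : HasDerivAt (fun w : ℝ => w ^ 2 / 2) z z := by
        have := (hasDerivAt_pow 2 z).div_const 2
        exact this.congr_deriv (by push_cast; ring)
      have h2 := h1.mul (Real.hasDerivAt_exp z)
      have h3 := (((hasDerivAt_id z).const_add (1 : ℝ)).add h2).sub (Real.hasDerivAt_exp z)
      exact h3
    have hmono : Monotone (fun w : ℝ => 1 + w + w ^ 2 / 2 * Real.exp w - Real.exp w) := by
      refine monotone_of_deriv_nonneg (fun z => (hg z).differentiableAt) (fun z => ?_)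
      rw [(hg z).deriv]
      have h1 : (-z + 1) * Real.exp z ≤ 1 := by
        have h2 := mul_le_mul_of_nonneg_right (Real.add_one_le_exp (-z)) (Real.exp_pos z).le
        rwa [← Real.exp_add, neg_add_cancel, Real.exp_zero] at h2
      nlinarith [mul_nonneg (by positivity : (0:ℝ) ≤ z ^ 2 / 2) (Real.exp_pos z).le]
    have h0 := hmono hy.le
    simp only [Real.exp_zero] at h0
    nlinarith [h0]

/-- **Cai–Liu exponential inequality.**
Let `ξ 1, …, ξ n` be independent real random variables with mean zero. Suppose that there exist
`t > 0` and `B̄ₙ > 0` such that `∑ k, E[ξ k ^ 2 * exp (t * |ξ k|)] ≤ B̄ₙ ^ 2`. Then for every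
`0 < x < B̄ₙ`, `P (∑ k, ξ k > Cₜ * B̄ₙ * x) ≤ exp (-x ^ 2)`, where `Cₜ = t + t⁻¹`. -/
theorem cai_liu_exponential_inequality
    {Ω : Type*} [MeasurableSpace Ω] (μ : Measure Ω) [IsProbabilityMeasure μ]
    (n : ℕ) (ξ : ℕ → Ω → ℝ)
    (hmeas : ∀ k, Measurable (ξ k))
    (hindep : iIndepFun ξ μ)
    (hint : ∀ k, Integrable (ξ k) μ)
    (hmean : ∀ k, ∫ ω, ξ k ω ∂μ = 0)
    (t B : ℝ) (ht : 0 < t) (hB : 0 < B)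
    (hmoment : ∑ k ∈ Finset.range n,
        ∫⁻ ω, ENNReal.ofReal ((ξ k ω) ^ 2 * Real.exp (t * |ξ k ω|)) ∂μ
      ≤ ENNReal.ofReal (B ^ 2))
    (x : ℝ) (hx0 : 0 < x) (hxB : x < B) :
    μ {ω | (t + t⁻¹) * B * x < ∑ k ∈ Finset.range n, ξ k ω}
      ≤ ENNReal.ofReal (Real.exp (-x ^ 2)) := by
  classical
  set s : ℝ := t * x / B with hs_def
  have hs0 : 0 < s := by positivity
  have hst : s ≤ t := by
    rw [hs_def, div_le_iff₀ hB]
    nlinarith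
  set F : ℕ → Ω → ℝ := fun k ω => (ξ k ω) ^ 2 * Real.exp (t * |ξ k ω|) with hF_def
  have hFmeas : ∀ k, Measurable (F k) := fun k =>
    ((hmeas k).pow_const 2).mul (((hmeas k).abs.const_mul t).exp)
  have hFnonneg : ∀ k ω, 0 ≤ F k ω := fun k ω => mul_nonneg (sq_nonneg _) (Real.exp_pos _).le
  have hlt : ∀ k ∈ Finset.range n, ∫⁻ ω, ENNReal.ofReal (F k ω) ∂μ ≠ ⊤ := by
    intro k hk
    exact (((Finset.single_le_sum (fun i _ => zero_le) hk).trans hmoment).trans_lt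
      ENNReal.ofReal_lt_top).ne
  have hFint : ∀ k ∈ Finset.range n, Integrable (F k) μ := by
    intro k hk
    refine ⟨(hFmeas k).aestronglyMeasurable, ?_⟩
    rw [hasFiniteIntegral_iff_ofReal (Filter.Eventually.of_forall (hFnonneg k))]
    exact (hlt k hk).lt_top
  have hFeq : ∀ k, ∫ ω, F k ω ∂μ = (∫⁻ ω, ENNReal.ofReal (F k ω) ∂μ).toReal := fun k =>
    integral_eq_lintegral_of_nonneg_ae (Filter.Eventually.of_forall (hFnonneg k))
      (hFmeas k).aestronglyMeasurable
  have hsum : ∑ k ∈ Finset.range n, ∫ ω, F k ω ∂μ ≤ B ^ 2 := by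
    calc ∑ k ∈ Finset.range n, ∫ ω, F k ω ∂μ
        = (∑ k ∈ Finset.range n, ∫⁻ ω, ENNReal.ofReal (F k ω) ∂μ).toReal := by
          rw [ENNReal.toReal_sum hlt]
          exact Finset.sum_congr rfl (fun k _ => hFeq k)
      _ ≤ B ^ 2 := ENNReal.toReal_le_of_le_ofReal (by positivity) hmoment
  -- key pointwise inequality
  have hkey : ∀ u : ℝ, Real.exp (s * u) ≤ 1 + s * u + s ^ 2 / 2 * (u ^ 2 * Real.exp (t * |u|)) := by
    intro u
    have h1 := exp_le_one_add_add_sq_half_mul_exp_abs (s * u)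
    have h2 : Real.exp |s * u| ≤ Real.exp (t * |u|) := by
      apply Real.exp_le_exp.mpr
      rw [abs_mul, abs_of_pos hs0]
      exact mul_le_mul_of_nonneg_right hst (abs_nonneg u)
    nlinarith [mul_le_mul_of_nonneg_left h2 (by positivity : (0:ℝ) ≤ (s * u) ^ 2 / 2),
      Real.exp_pos (t * |u|), sq_nonneg (s * u)]
  have hGint : ∀ k ∈ Finset.range n,
      Integrable (fun ω => 1 + s * ξ k ω + s ^ 2 / 2 * F k ω) μ := by
    intro k hk
    exact ((integrable_const (1 : ℝ)).add ((hint k).const_mul s)).add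
      ((hFint k hk).const_mul (s ^ 2 / 2))
  have hExpInt : ∀ k ∈ Finset.range n, Integrable (fun ω => Real.exp (s * ξ k ω)) μ := by
    intro k hk
    refine (hGint k hk).mono (((hmeas k).const_mul s).exp.aestronglyMeasurable)
      (Filter.Eventually.of_forall (fun ω => ?_))
    rw [Real.norm_eq_abs, abs_of_pos (Real.exp_pos _)]
    exact (hkey (ξ k ω)).trans (le_abs_self _)
  -- mgf bound per coordinate
  have hmgf : ∀ k ∈ Finset.range n,
      mgf (ξ k) μ s ≤ Real.exp (s ^ 2 / 2 * ∫ ω, F k ω ∂μ) := by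
    intro k hk
    have step1 : mgf (ξ k) μ s ≤ ∫ ω, (1 + s * ξ k ω + s ^ 2 / 2 * F k ω) ∂μ :=
      integral_mono (hExpInt k hk) (hGint k hk) (fun ω => hkey (ξ k ω))
    have step2 : ∫ ω, (1 + s * ξ k ω + s ^ 2 / 2 * F k ω) ∂μ
        = 1 + s ^ 2 / 2 * ∫ ω, F k ω ∂μ := by
      have hA : Integrable (fun ω => 1 + s * ξ k ω) μ :=
        (integrable_const (1 : ℝ)).add ((hint k).const_mul s)
      have hA1 : Integrable (fun ω => s * ξ k ω) μ := (hint k).const_mul s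
      have hC : Integrable (fun ω => s ^ 2 / 2 * F k ω) μ := (hFint k hk).const_mul _
      rw [integral_add hA hC, integral_add (integrable_const (1 : ℝ)) hA1,
        integral_const, integral_const_mul, integral_const_mul, hmean k]
      simp
    rw [step2] at step1
    exact step1.trans (by linarith [Real.add_one_le_exp (s ^ 2 / 2 * ∫ ω, F k ω ∂μ)])
  have hSint : Integrable (fun ω => Real.exp (s * (∑ k ∈ Finset.range n, ξ k) ω)) μ :=
    hindep.integrable_exp_mul_sum hmeas hExpInt
  have hcher := measure_ge_le_exp_mul_mgf (μ := μ) (X := ∑ k ∈ Finset.range n, ξ k)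
    ((t + t⁻¹) * B * x) hs0.le hSint
  have hmgfS : mgf (∑ k ∈ Finset.range n, ξ k) μ s ≤ Real.exp (s ^ 2 / 2 * B ^ 2) := by
    rw [hindep.mgf_sum hmeas]
    calc ∏ k ∈ Finset.range n, mgf (ξ k) μ s
        ≤ ∏ k ∈ Finset.range n, Real.exp (s ^ 2 / 2 * ∫ ω, F k ω ∂μ) :=
          Finset.prod_le_prod (fun k _ => mgf_nonneg) hmgf
      _ = Real.exp (∑ k ∈ Finset.range n, s ^ 2 / 2 * ∫ ω, F k ω ∂μ) :=
          (Real.exp_sum _ _).symm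
      _ ≤ Real.exp (s ^ 2 / 2 * B ^ 2) := by
          apply Real.exp_le_exp.mpr
          rw [← Finset.mul_sum]
          exact mul_le_mul_of_nonneg_left hsum (by positivity)
  have hnum : -s * ((t + t⁻¹) * B * x) + s ^ 2 / 2 * B ^ 2 ≤ -x ^ 2 := by
    have hexp : -s * ((t + t⁻¹) * B * x) + s ^ 2 / 2 * B ^ 2
        = -x ^ 2 - t ^ 2 * x ^ 2 / 2 := by
      rw [hs_def]
      field_simp
      ring
    rw [hexp]
    nlinarith [sq_nonneg (t * x)]
  have hreal : (μ {ω | (t + t⁻¹) * B * x ≤ (∑ k ∈ Finset.range n, ξ k) ω}).toReal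
      ≤ Real.exp (-x ^ 2) := by
    refine hcher.trans ?_
    calc Real.exp (-s * ((t + t⁻¹) * B * x)) * mgf (∑ k ∈ Finset.range n, ξ k) μ s
        ≤ Real.exp (-s * ((t + t⁻¹) * B * x)) * Real.exp (s ^ 2 / 2 * B ^ 2) :=
          mul_le_mul_of_nonneg_left hmgfS (Real.exp_pos _).le
      _ = Real.exp (-s * ((t + t⁻¹) * B * x) + s ^ 2 / 2 * B ^ 2) := (Real.exp_add _ _).symm
      _ ≤ Real.exp (-x ^ 2) := Real.exp_le_exp.mpr hnum
  calc μ {ω | (t + t⁻¹) * B * x < ∑ k ∈ Finset.range n, ξ k ω}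
      ≤ μ {ω | (t + t⁻¹) * B * x ≤ (∑ k ∈ Finset.range n, ξ k) ω} := by
        apply measure_mono
        intro ω hω
        simp only [Set.mem_setOf_eq, Finset.sum_apply] at *
        exact hω.le
    _ = ENNReal.ofReal ((μ {ω | (t + t⁻¹) * B * x ≤ (∑ k ∈ Finset.range n, ξ k) ω}).toReal) :=
        (ENNReal.ofReal_toReal (measure_ne_top _ _)).symm
    _ ≤ ENNReal.ofReal (Real.exp (-x ^ 2)) := ENNReal.ofReal_le_ofReal hreal
end

section
/- There exists a constant C depending only on C₀ and C_H such that for every h > 0 and every a ∈ ℝ, E[ ( H((ε − a)/h) − 1{ε ≥ 0} )² ] ≤ C h ( |a|/h + 1 ). -/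
open MeasureTheory

/-- Let `ε` be a real random variable whose law has a density `f` bounded by `C₀`, and let
`H : ℝ → ℝ` satisfy `H u = 1` for `u ≥ 1`, `H u = 0` for `u ≤ -1`, and `|H u| ≤ C_H`.
Then there is a constant `C` depending only on `C₀` and `C_H` such that for all `h > 0`
and `a : ℝ`, `E[(H ((ε - a)/h) - 1{ε ≥ 0})²] ≤ C * h * (|a|/h + 1)`. -/
theorem smoothed_indicator_second_moment_bound
    (C₀ CH : ℝ) (hC₀ : 0 < C₀) (hCH : 0 < CH) :
    ∃ C : ℝ, 0 < C ∧
      ∀ (f : ℝ → ℝ) (H : ℝ → ℝ),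
        Measurable f → (∀ x, 0 ≤ f x) → (∀ x, f x ≤ C₀) → (∫ x, f x = 1) →
        (∀ u, 1 ≤ u → H u = 1) → (∀ u, u ≤ -1 → H u = 0) → (∀ u, |H u| ≤ CH) →
        ∀ (h : ℝ), 0 < h → ∀ (a : ℝ),
          ∫ x, (H ((x - a) / h) - (if 0 ≤ x then (1 : ℝ) else 0)) ^ 2 * f x
            ≤ C * h * (|a| / h + 1) := by
  refine ⟨2 * C₀ * (CH + 1) ^ 2, by positivity, ?_⟩
  intro f H hf hf0 hfC hfint hH1 hH0 hHb h hh a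
  set K : ℝ := (CH + 1) ^ 2 * C₀ with hKdef
  have hK0 : 0 ≤ K := by positivity
  set m : ℝ := min 0 (a - h) with hm
  set M : ℝ := max 0 (a + h) with hM
  have hmM : m ≤ M := le_trans (min_le_left _ _) (le_max_left _ _)
  have hb : Integrable (Set.indicator (Set.Icc m M) (fun _ => K)) := by
    rw [integrable_indicator_iff measurableSet_Icc]
    exact (integrableOn_const_iff).mpr (Or.inr measure_Icc_lt_top)
  have hle : ∀ x, (H ((x - a) / h) - (if 0 ≤ x then (1 : ℝ) else 0)) ^ 2 * f x
      ≤ Set.indicator (Set.Icc m M) (fun _ => K) x := by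
    intro x
    by_cases hx : x ∈ Set.Icc m M
    · rw [Set.indicator_of_mem hx]
      have h1 : |H ((x - a) / h) - (if 0 ≤ x then (1 : ℝ) else 0)| ≤ CH + 1 := by
        have h2 : |(if 0 ≤ x then (1 : ℝ) else 0)| ≤ 1 := by split <;> simp
        calc |H ((x - a) / h) - (if 0 ≤ x then (1 : ℝ) else 0)|
            ≤ |H ((x - a) / h)| + |(if 0 ≤ x then (1 : ℝ) else 0)| := abs_sub _ _
          _ ≤ CH + 1 := add_le_add (hHb _) h2
      have h3 : (H ((x - a) / h) - (if 0 ≤ x then (1 : ℝ) else 0)) ^ 2 ≤ (CH + 1) ^ 2 := by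
        rw [← sq_abs]
        exact pow_le_pow_left₀ (abs_nonneg _) h1 2
      calc (H ((x - a) / h) - (if 0 ≤ x then (1 : ℝ) else 0)) ^ 2 * f x
          ≤ (CH + 1) ^ 2 * C₀ :=
            mul_le_mul h3 (hfC x) (hf0 x) (by positivity)
        _ = K := hKdef.symm
    · rw [Set.indicator_of_notMem hx]
      rw [Set.mem_Icc, not_and_or, not_le, not_le] at hx
      have hz : H ((x - a) / h) - (if 0 ≤ x then (1 : ℝ) else 0) = 0 := by
        rcases hx with hx | hx
        · have hx0 : x < 0 := lt_of_lt_of_le hx (min_le_left _ _)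
          have hxa : x < a - h := lt_of_lt_of_le hx (min_le_right _ _)
          have : (x - a) / h ≤ -1 := by
            rw [div_le_iff₀ hh]; linarith
          rw [hH0 _ this, if_neg (not_le.mpr hx0)]; ring
        · have hx0 : 0 < x := lt_of_le_of_lt (le_max_left _ _) hx
          have hxa : a + h < x := lt_of_le_of_lt (le_max_right _ _) hx
          have : (1 : ℝ) ≤ (x - a) / h := by
            rw [le_div_iff₀ hh]; linarith
          rw [hH1 _ this, if_pos hx0.le]; ring
      rw [hz]; simp
  have key : ∫ x, (H ((x - a) / h) - (if 0 ≤ x then (1 : ℝ) else 0)) ^ 2 * f x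
      ≤ ∫ x, Set.indicator (Set.Icc m M) (fun _ => K) x := by
    refine integral_mono_of_nonneg ?_ hb (Filter.Eventually.of_forall hle)
    exact Filter.Eventually.of_forall fun x => mul_nonneg (sq_nonneg _) (hf0 x)
  have hvol : ∫ x, Set.indicator (Set.Icc m M) (fun _ => K) x = (M - m) * K := by
    rw [integral_indicator_const _ measurableSet_Icc]
    simp [Real.volume_Icc, ENNReal.toReal_ofReal (sub_nonneg.mpr hmM), smul_eq_mul, hmM]
  have hMm : M - m ≤ 2 * (|a| + h) := by
    have h1 : M ≤ |a| + h := by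
      apply max_le (by positivity) (by nlinarith [abs_nonneg a, le_abs_self a])
    have h2 : -(|a| + h) ≤ m := by
      apply le_min (by linarith [abs_nonneg a]) (by nlinarith [abs_nonneg a, neg_abs_le a])
    linarith
  have hrhs : 2 * C₀ * (CH + 1) ^ 2 * h * (|a| / h + 1) = 2 * (|a| + h) * K := by
    field_simp [hKdef]; ring
  calc ∫ x, (H ((x - a) / h) - (if 0 ≤ x then (1 : ℝ) else 0)) ^ 2 * f x
      ≤ (M - m) * K := key.trans_eq hvol
    _ ≤ 2 * (|a| + h) * K := mul_le_mul_of_nonneg_right hMm hK0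
    _ = 2 * C₀ * (CH + 1) ^ 2 * h * (|a| / h + 1) := hrhs.symm
end

section
/- There exists a constant C depending only on L and H such that for every h > 0 and every a ∈ ℝ, | E[H((ε − a)/h)] − (1 − τ) + f(0) ( a + h ∫_{−1}^{1} x H'(x) dx ) | ≤ C (h² + a²). -/
open MeasureTheory intervalIntegral

set_option maxHeartbeats 2000000

/-- Let `ε` be a real random variable whose law has a Lipschitz density `f` (constant `L`)
with `P(ε ≤ 0) = τ`, and let `H : ℝ → ℝ` be twice differentiable with `H u = 1` for `u ≥ 1`,
`H u = 0` for `u ≤ -1`, and bounded second derivative. Then there is a constant `C` depending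
only on `L` and `H` such that for every `h > 0` and `a : ℝ`,
`|E[H ((ε - a)/h)] - (1 - τ) + f 0 * (a + h * ∫_{-1}^{1} x H'(x) dx)| ≤ C * (h² + a²)`. -/
theorem smoothed_indicator_mean_expansion
    (L : ℝ) (hL : 0 < L) (H : ℝ → ℝ)
    (hH1 : ∀ u, 1 ≤ u → H u = 1) (hH0 : ∀ u, u ≤ -1 → H u = 0)
    (hHdiff : Differentiable ℝ H) (hHdiff2 : Differentiable ℝ (deriv H))
    (hHbdd : ∃ C₂ : ℝ, ∀ u, |deriv (deriv H) u| ≤ C₂) :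
    ∃ C : ℝ, 0 < C ∧
      ∀ (f : ℝ → ℝ) (τ : ℝ),
        0 < τ → τ < 1 →
        Measurable f → (∀ x, 0 ≤ f x) → (∫ x, f x = 1) →
        (∀ x y : ℝ, |f x - f y| ≤ L * |x - y|) →
        (∫ x in Set.Iic (0 : ℝ), f x) = τ →
        ∀ (h : ℝ), 0 < h → ∀ (a : ℝ),
          |(∫ x, H ((x - a) / h) * f x) - (1 - τ)
              + f 0 * (a + h * ∫ x in (-1 : ℝ)..1, x * deriv H x)|
            ≤ C * (h ^ 2 + a ^ 2) := by
  classical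
  obtain ⟨C₂, hC₂⟩ := hHbdd
  have hC₂0 : (0:ℝ) ≤ C₂ := (abs_nonneg _).trans (hC₂ 0)
  have hHc : Continuous H := hHdiff.continuous
  -- deriv H vanishes below -1
  have hH'0 : ∀ x : ℝ, x < -1 → deriv H x = 0 := by
    intro x hx
    have hev : H =ᶠ[nhds x] (fun _ => (0:ℝ)) := by
      filter_upwards [Iio_mem_nhds hx] with y hy
      exact hH0 y hy.le
    rw [hev.deriv_eq]
    simp
  -- bound on deriv H on [-2, 1]
  have hH'bd : ∀ u ∈ Set.Icc (-2:ℝ) 1, |deriv H u| ≤ 3 * C₂ := by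
    intro u hu
    have key := Convex.norm_image_sub_le_of_norm_deriv_le
      (f := deriv H) (s := Set.univ) (fun x _ => hHdiff2.differentiableAt)
      (fun x _ => by simpa using hC₂ x) convex_univ (Set.mem_univ (-2:ℝ)) (Set.mem_univ u)
    rw [hH'0 (-2) (by norm_num)] at key
    simp only [Real.norm_eq_abs, sub_zero] at key
    have h3 : |u - (-2)| ≤ 3 := by
      rw [abs_le]; constructor <;> [linarith [hu.1]; linarith [hu.2]]
    calc |deriv H u| ≤ C₂ * |u - (-2)| := key
      _ ≤ C₂ * 3 := by nlinarith [abs_nonneg (u - (-2))]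
      _ = 3 * C₂ := by ring
  set M : ℝ := max 1 (9 * C₂) with hM
  have hM1 : (1:ℝ) ≤ M := le_max_left _ _
  have hM0 : (0:ℝ) < M := lt_of_lt_of_le one_pos hM1
  -- global bound on H
  have hHbd : ∀ u : ℝ, |H u| ≤ M := by
    intro u
    rcases le_or_gt u (-1) with hu | hu
    · rw [hH0 u hu]; simpa using hM0.le
    rcases le_or_gt 1 u with hu2 | hu2
    · rw [hH1 u hu2]; simpa using hM1
    · have key := Convex.norm_image_sub_le_of_norm_deriv_le
        (f := H) (s := Set.Icc (-2:ℝ) 1) (fun x _ => hHdiff.differentiableAt)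
        (fun x hx => by simpa using hH'bd x hx) (convex_Icc _ _)
        (Set.mem_Icc.2 ⟨le_refl _, by norm_num⟩) (Set.mem_Icc.2 ⟨by linarith, hu2.le⟩)
      rw [hH0 (-2) (by norm_num)] at key
      simp only [Real.norm_eq_abs, sub_zero] at key
      have h3 : |u - (-2)| ≤ 3 := by rw [abs_le]; constructor <;> linarith
      calc |H u| ≤ 3 * C₂ * |u - (-2)| := key
        _ ≤ 3 * C₂ * 3 := by nlinarith [abs_nonneg (u - (-2))]
        _ = 9 * C₂ := by ring
        _ ≤ M := le_max_right _ _
  refine ⟨L * (3 * M + 2), by positivity, ?_⟩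
  intro f τ hτ0 hτ1 hfm hfnn hfint1 hfLip hfτ h hh a
  have hh0 : h ≠ 0 := ne_of_gt hh
  -- f is continuous
  have hfc : Continuous f := by
    have : LipschitzWith (Real.toNNReal L) f := by
      apply LipschitzWith.of_dist_le_mul
      intro x y
      rw [Real.dist_eq, Real.dist_eq, Real.coe_toNNReal L hL.le]
      exact hfLip x y
    exact this.continuous
  -- f is integrable
  have hfint : Integrable f := by
    by_contra hc
    rw [integral_undef hc] at hfint1
    norm_num at hfint1
  -- the integrand
  set g : ℝ → ℝ := fun x => H ((x - a) / h) * f x with hg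
  have hgc : Continuous g := (hHc.comp (by fun_prop)).mul hfc
  have hgint : Integrable g := by
    apply hfint.bdd_mul ((hHc.comp (by fun_prop)).aestronglyMeasurable)
    exact ae_of_all _ (fun x => (by simpa using hHbd _ : ‖H ((x - a) / h)‖ ≤ M))
  -- substituted integrand
  set φ : ℝ → ℝ := fun u => H u * f (a + h * u) with hφ
  have hφc : Continuous φ := hHc.mul (hfc.comp (by fun_prop))
  have hgφ : ∀ x : ℝ, g x = φ (x / h - a / h) := by
    intro x
    show H ((x - a) / h) * f x = H (x / h - a / h) * f (a + h * (x / h - a / h))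
    have h1 : (x - a) / h = x / h - a / h := sub_div _ _ _
    have h2 : a + h * (x / h - a / h) = x := by field_simp; ring
    rw [h1, h2]
  -- split the integral
  have hsplit : (∫ x, g x) = (∫ x in Set.Iic (a + h), g x) + ∫ x in Set.Ioi (a + h), g x :=
    (integral_Iic_add_Ioi hgint.integrableOn hgint.integrableOn).symm
  -- right piece: g = f there
  have hright : (∫ x in Set.Ioi (a + h), g x) = ∫ x in Set.Ioi (a + h), f x := by
    apply setIntegral_congr_fun measurableSet_Ioi
    intro x hx
    have hx' : (1:ℝ) ≤ (x - a) / h := by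
      rw [le_div_iff₀ hh]
      have : a + h < x := hx
      linarith
    show H ((x - a) / h) * f x = f x
    rw [hH1 _ hx', one_mul]
  have hrightf : (∫ x in Set.Ioi (a + h), f x) = 1 - ∫ x in Set.Iic (a + h), f x := by
    have := integral_Iic_add_Ioi (b := a + h) hfint.integrableOn hfint.integrableOn
    rw [hfint1] at this
    linarith
  -- left piece: split at a - h
  have hWsplit : (∫ x in Set.Iic (a + h), g x)
      = (∫ x in Set.Iic (a - h), g x) + ∫ x in Set.Ioc (a - h) (a + h), g x := by
    rw [← setIntegral_union (Set.Iic_disjoint_Ioc le_rfl) measurableSet_Ioc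
      hgint.integrableOn hgint.integrableOn,
      Set.Iic_union_Ioc_eq_Iic (by linarith : a - h ≤ a + h)]
  have hleft0 : (∫ x in Set.Iic (a - h), g x) = 0 := by
    rw [setIntegral_congr_fun measurableSet_Iic (g := fun _ => (0:ℝ))]
    · simp
    · intro x hx
      have hx' : (x - a) / h ≤ -1 := by
        rw [div_le_iff₀ hh]
        have : x ≤ a - h := hx
        linarith
      show H ((x - a) / h) * f x = 0
      rw [hH0 _ hx', zero_mul]
  -- middle: change of variables
  have hmid : (∫ x in Set.Ioc (a - h) (a + h), g x) = h * ∫ u in (-1:ℝ)..1, φ u := by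
    rw [← intervalIntegral.integral_of_le (by linarith : a - h ≤ a + h)]
    have h1 : (∫ x in (a - h)..(a + h), g x) = ∫ x in (a - h)..(a + h), φ (x / h - a / h) := by
      apply intervalIntegral.integral_congr
      intro x _
      exact hgφ x
    rw [h1, intervalIntegral.integral_comp_div_sub φ hh0 (a / h)]
    have e1 : (a - h) / h - a / h = -1 := by field_simp; ring
    have e2 : (a + h) / h - a / h = 1 := by field_simp; try ring
    rw [e1, e2, smul_eq_mul]
  -- integration by parts
  have hIBP : (∫ x in (-1:ℝ)..1, x * deriv H x) = 1 - ∫ x in (-1:ℝ)..1, H x := by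
    have := intervalIntegral.integral_mul_deriv_eq_deriv_mul
      (u := fun x : ℝ => x) (v := H) (u' := fun _ => (1:ℝ)) (v' := deriv H)
      (a := (-1:ℝ)) (b := 1)
      (fun x _ => hasDerivAt_id x)
      (fun x _ => hHdiff.differentiableAt.hasDerivAt)
      (by apply Continuous.intervalIntegrable; continuity)
      (by apply Continuous.intervalIntegrable; exact hHdiff2.continuous)
    rw [this, hH1 1 le_rfl, hH0 (-1) le_rfl]
    simp
  -- F notation
  set F1 : ℝ := ∫ x in Set.Iic (a + h), f x with hF1
  have hIicsub : F1 - τ = ∫ x in (0:ℝ)..(a + h), f x := by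
    rw [← hfτ]
    exact intervalIntegral.integral_Iic_sub_Iic hfint.integrableOn hfint.integrableOn
  -- key decomposition
  have hE : (∫ x, g x) = h * (∫ u in (-1:ℝ)..1, φ u) + (1 - F1) := by
    rw [hsplit, hWsplit, hleft0, hmid, hright, hrightf]
    ring
  -- bound on middle difference
  have hmidbd : |(∫ u in (-1:ℝ)..1, φ u) - f 0 * ∫ x in (-1:ℝ)..1, H x|
      ≤ M * (L * (|a| + h)) * 2 := by
    have hsub : (∫ u in (-1:ℝ)..1, φ u) - f 0 * ∫ x in (-1:ℝ)..1, H x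
        = ∫ u in (-1:ℝ)..1, (φ u - H u * f 0) := by
      rw [intervalIntegral.integral_sub (hφc.intervalIntegrable _ _)
        (show IntervalIntegrable (fun u => H u * f 0) volume (-1) 1 from
          (hHc.mul continuous_const).intervalIntegrable _ _)]
      congr 1
      rw [← intervalIntegral.integral_const_mul]
      apply intervalIntegral.integral_congr
      intro x _
      ring
    rw [hsub]
    have hbound : ∀ u ∈ Set.uIoc (-1:ℝ) 1, ‖φ u - H u * f 0‖ ≤ M * (L * (|a| + h)) := by
      intro u hu
      have hu' : u ∈ Set.Ioc (-1:ℝ) 1 := by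
        rwa [Set.uIoc_of_le (by norm_num : (-1:ℝ) ≤ 1)] at hu
      have habs : |a + h * u| ≤ |a| + h := by
        calc |a + h * u| ≤ |a| + |h * u| := abs_add_le _ _
          _ = |a| + h * |u| := by rw [abs_mul, abs_of_pos hh]
          _ ≤ |a| + h * 1 := by
              have : |u| ≤ 1 := abs_le.2 ⟨hu'.1.le, hu'.2⟩
              nlinarith
          _ = |a| + h := by ring
      show ‖φ u - H u * f 0‖ ≤ M * (L * (|a| + h))
      have : φ u - H u * f 0 = H u * (f (a + h * u) - f 0) := by
        show H u * f (a + h * u) - H u * f 0 = _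
        ring
      rw [Real.norm_eq_abs, this, abs_mul]
      have h1 : |f (a + h * u) - f 0| ≤ L * (|a| + h) := by
        calc |f (a + h * u) - f 0| ≤ L * |a + h * u - 0| := hfLip _ _
          _ = L * |a + h * u| := by rw [sub_zero]
          _ ≤ L * (|a| + h) := by nlinarith
      exact mul_le_mul (hHbd u) h1 (abs_nonneg _) hM0.le
    have hle := intervalIntegral.norm_integral_le_of_norm_le_const hbound
    calc |∫ u in (-1:ℝ)..1, (φ u - H u * f 0)| ≤ M * (L * (|a| + h)) * |1 - (-1:ℝ)| := hle
      _ = M * (L * (|a| + h)) * 2 := by norm_num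
  -- bound on the CDF difference
  have hFbd : |(∫ x in (0:ℝ)..(a + h), f x) - f 0 * (a + h)| ≤ L * (a + h) ^ 2 := by
    have hsub : (∫ x in (0:ℝ)..(a + h), f x) - f 0 * (a + h)
        = ∫ x in (0:ℝ)..(a + h), (f x - f 0) := by
      rw [intervalIntegral.integral_sub (hfc.intervalIntegrable _ _)
        (intervalIntegrable_const)]
      simp [mul_comm]
    rw [hsub]
    have hbound : ∀ x ∈ Set.uIoc (0:ℝ) (a + h), ‖f x - f 0‖ ≤ L * |a + h| := by
      intro x hx
      have hx' : |x| ≤ |a + h| := by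
        rcases Set.mem_uIoc.1 hx with ⟨h1, h2⟩ | ⟨h1, h2⟩
        · rw [abs_of_pos h1]
          exact le_trans h2 (le_abs_self _)
        · rw [abs_of_nonpos h2]
          have : -(a + h) ≤ |a + h| := neg_le_abs _
          linarith
      show ‖f x - f 0‖ ≤ L * |a + h|
      rw [Real.norm_eq_abs]
      calc |f x - f 0| ≤ L * |x - 0| := hfLip _ _
        _ = L * |x| := by rw [sub_zero]
        _ ≤ L * |a + h| := by nlinarith
    have hle := intervalIntegral.norm_integral_le_of_norm_le_const hbound
    calc |∫ x in (0:ℝ)..(a + h), (f x - f 0)| ≤ L * |a + h| * |a + h - 0| := hle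
      _ = L * (a + h) ^ 2 := by
          rw [sub_zero, mul_assoc, abs_mul_abs_self]; ring
  -- assemble
  have hT : (∫ x, g x) - (1 - τ) + f 0 * (a + h * ∫ x in (-1:ℝ)..1, x * deriv H x)
      = h * ((∫ u in (-1:ℝ)..1, φ u) - f 0 * ∫ x in (-1:ℝ)..1, H x)
        - ((∫ x in (0:ℝ)..(a + h), f x) - f 0 * (a + h)) := by
    rw [hE, hIBP, ← hIicsub]
    ring
  show |(∫ x, g x) - (1 - τ) + f 0 * (a + h * ∫ x in (-1:ℝ)..1, x * deriv H x)|
      ≤ L * (3 * M + 2) * (h ^ 2 + a ^ 2)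
  rw [hT]
  have hA : |h * ((∫ u in (-1:ℝ)..1, φ u) - f 0 * ∫ x in (-1:ℝ)..1, H x)|
      ≤ h * (M * (L * (|a| + h)) * 2) := by
    rw [abs_mul, abs_of_pos hh]
    exact mul_le_mul_of_nonneg_left hmidbd hh.le
  have key := (abs_sub (h * ((∫ u in (-1:ℝ)..1, φ u) - f 0 * ∫ x in (-1:ℝ)..1, H x))
      ((∫ x in (0:ℝ)..(a + h), f x) - f 0 * (a + h))).trans (add_le_add hA hFbd)
  refine le_trans key ?_
  have h1 : 2 * h * |a| ≤ h ^ 2 + a ^ 2 := by nlinarith [sq_abs a, sq_nonneg (h - |a|)]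
  have h2 : (a + h) ^ 2 ≤ 2 * (h ^ 2 + a ^ 2) := by nlinarith [sq_nonneg (a - h)]
  nlinarith [mul_le_mul_of_nonneg_left h1 (mul_pos hM0 hL).le,
    mul_le_mul_of_nonneg_left h2 hL.le, sq_nonneg h, sq_nonneg a,
    mul_pos hM0 hL, mul_nonneg (mul_pos hM0 hL).le (sq_nonneg h)]
end

section
/- There exists a constant C depending only on L and H such that for every h > 0 and every a ∈ ℝ, | E[(ε/h) H'((ε − a)/h)] − f(0) ( a + h ∫_{−1}^{1} x H'(x) dx ) | ≤ C (h² + a²). -/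
open MeasureTheory intervalIntegral

/-- Auxiliary: a differentiable function constant on a closed ray has vanishing
derivative on the ray (including the endpoint), provided `deriv H` is continuous. -/
lemma aux_deriv_zero_le (H : ℝ → ℝ) (c : ℝ) (v : ℝ) (hH : ∀ u, u ≤ c → H u = v)
    (hcont : Continuous (deriv H)) : ∀ u, u ≤ c → deriv H u = 0 := by
  have hlt : ∀ u, u < c → deriv H u = 0 := by
    intro u hu
    have : H =ᶠ[nhds u] (fun _ => v) := by
      filter_upwards [Iio_mem_nhds hu] with x hx using hH x (le_of_lt hx)
    rw [this.deriv_eq]; simp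
  intro u hu
  rcases eq_or_lt_of_le hu with rfl | h
  · have h1 : Filter.Tendsto (deriv H) (nhdsWithin u (Set.Iio u)) (nhds (deriv H u)) :=
      (hcont.continuousAt).continuousWithinAt.tendsto
    have h2 : Filter.Tendsto (deriv H) (nhdsWithin u (Set.Iio u)) (nhds 0) := by
      apply Filter.Tendsto.congr' _ tendsto_const_nhds
      filter_upwards [self_mem_nhdsWithin] with x hx using (hlt x hx).symm
    exact tendsto_nhds_unique h1 h2
  · exact hlt u h

lemma aux_deriv_zero_ge (H : ℝ → ℝ) (c : ℝ) (v : ℝ) (hH : ∀ u, c ≤ u → H u = v)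
    (hcont : Continuous (deriv H)) : ∀ u, c ≤ u → deriv H u = 0 := by
  have hgt : ∀ u, c < u → deriv H u = 0 := by
    intro u hu
    have : H =ᶠ[nhds u] (fun _ => v) := by
      filter_upwards [Ioi_mem_nhds hu] with x hx using hH x (le_of_lt hx)
    rw [this.deriv_eq]; simp
  intro u hu
  rcases eq_or_lt_of_le hu with rfl | h
  · have h1 : Filter.Tendsto (deriv H) (nhdsWithin c (Set.Ioi c)) (nhds (deriv H c)) :=
      (hcont.continuousAt).continuousWithinAt.tendsto
    have h2 : Filter.Tendsto (deriv H) (nhdsWithin c (Set.Ioi c)) (nhds 0) := by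
      apply Filter.Tendsto.congr' _ tendsto_const_nhds
      filter_upwards [self_mem_nhdsWithin] with x hx using (hgt x hx).symm
    exact tendsto_nhds_unique h1 h2
  · exact hgt u h

/-- Let `ε` be a real random variable whose law has a Lipschitz density `f` (constant `L`)
with `P(ε ≤ 0) = τ`, and let `H : ℝ → ℝ` be twice differentiable with `H u = 1` for `u ≥ 1`,
`H u = 0` for `u ≤ -1`, and bounded second derivative. Then there is a constant `C` depending
only on `L` and `H` such that for every `h > 0` and `a : ℝ`,
`|E[(ε/h) H'((ε - a)/h)] - f 0 * (a + h * ∫_{-1}^{1} x H'(x) dx)| ≤ C * (h² + a²)`. -/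
theorem smoothed_kernel_mean_expansion
    (L : ℝ) (hL : 0 < L) (H : ℝ → ℝ)
    (hH1 : ∀ u, 1 ≤ u → H u = 1) (hH0 : ∀ u, u ≤ -1 → H u = 0)
    (hHdiff : Differentiable ℝ H) (hHdiff2 : Differentiable ℝ (deriv H))
    (hHbdd : ∃ C₂ : ℝ, ∀ u, |deriv (deriv H) u| ≤ C₂) :
    ∃ C : ℝ, 0 < C ∧
      ∀ (f : ℝ → ℝ) (τ : ℝ),
        0 < τ → τ < 1 →
        Measurable f → (∀ x, 0 ≤ f x) → (∫ x, f x = 1) →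
        (∀ x y : ℝ, |f x - f y| ≤ L * |x - y|) →
        (∫ x in Set.Iic (0 : ℝ), f x) = τ →
        ∀ (h : ℝ), 0 < h → ∀ (a : ℝ),
          |(∫ x, (x / h) * deriv H ((x - a) / h) * f x)
              - f 0 * (a + h * ∫ x in (-1 : ℝ)..1, x * deriv H x)|
            ≤ C * (h ^ 2 + a ^ 2) := by
  obtain ⟨C₂, hC₂⟩ := hHbdd
  have hC₂0 : 0 ≤ C₂ := (abs_nonneg _).trans (hC₂ 0)
  have hH'cont : Continuous (deriv H) := hHdiff2.continuous
  have hH'le : ∀ u, u ≤ -1 → deriv H u = 0 := aux_deriv_zero_le H (-1) 0 hH0 hH'cont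
  have hH'ge : ∀ u, 1 ≤ u → deriv H u = 0 := aux_deriv_zero_ge H 1 1 hH1 hH'cont
  -- Lipschitz bound on deriv H, hence uniform bound 2*C₂
  have hH'lip : ∀ u v : ℝ, |deriv H u - deriv H v| ≤ C₂ * |u - v| := by
    intro u v
    have := lipschitzWith_of_nnnorm_deriv_le (𝕜 := ℝ) (f := deriv H) (C := ⟨C₂, hC₂0⟩)
      hHdiff2 (fun x => NNReal.coe_le_coe.mp (by rw [coe_nnnorm, Real.norm_eq_abs]; exact hC₂ x))
    have := this.dist_le_mul u v
    rw [Real.dist_eq, Real.dist_eq] at this; exact this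
  have hH'bound : ∀ u : ℝ, |deriv H u| ≤ 2 * C₂ := by
    intro u
    rcases le_or_gt u (-1) with hu | hu
    · rw [hH'le u hu]; simp; positivity
    rcases le_or_gt 1 u with hu' | hu'
    · rw [hH'ge u hu']; simp; positivity
    · have := hH'lip u (-1)
      rw [hH'le (-1) le_rfl] at this
      have : |deriv H u| ≤ C₂ * |u + 1| := by simpa [sub_neg_eq_add] using this
      have h2 : |u + 1| ≤ 2 := by rw [abs_le]; constructor <;> linarith
      calc |deriv H u| ≤ C₂ * |u + 1| := this
        _ ≤ C₂ * 2 := by nlinarith [abs_nonneg (u+1)]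
        _ = 2 * C₂ := by ring
  -- FTC: ∫ deriv H over [-1,1] = 1
  have hFTC : (∫ u in (-1:ℝ)..1, deriv H u) = 1 := by
    rw [intervalIntegral.integral_deriv_eq_sub (fun x _ => hHdiff x)
      ((hH'cont.intervalIntegrable _ _))]
    rw [hH1 1 le_rfl, hH0 (-1) le_rfl]; norm_num
  refine ⟨8 * L * C₂ + 1, by positivity, ?_⟩
  intro f τ hτ0 hτ1 hfm hf0 hfint hfLip hftau h hh a
  have hfc : Continuous f := by
    have : LipschitzWith ⟨L, hL.le⟩ f := by
      apply LipschitzWith.of_dist_le_mul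
      intro x y
      rw [Real.dist_eq, Real.dist_eq]; exact hfLip x y
    exact this.continuous
  set g : ℝ → ℝ := fun x => (x / h) * deriv H ((x - a) / h) * f x with hg
  -- Step 1: whole-line integral equals interval integral over [a-h, a+h]
  have step1 : (∫ x, g x) = ∫ x in (a - h)..(a + h), g x := by
    rw [intervalIntegral.integral_eq_integral_of_support_subset]
    intro x hx
    simp only [Function.mem_support, hg] at hx
    constructor
    · by_contra hc
      push_neg at hc
      have : (x - a) / h ≤ -1 := by
        rw [div_le_iff₀ hh]; linarith
      exact hx (by rw [hH'le _ this]; ring)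
    · by_contra hc
      push_neg at hc
      have : (1:ℝ) ≤ (x - a) / h := by
        rw [le_div_iff₀ hh]; linarith
      exact hx (by rw [hH'ge _ this]; ring)
  -- Step 2: substitution x = h*u + a
  have step2 : (∫ x in (a - h)..(a + h), g x) =
      ∫ u in (-1:ℝ)..1, (h * u + a) * deriv H u * f (h * u + a) := by
    have := intervalIntegral.integral_comp_mul_add (a := (-1:ℝ)) (b := 1) (f := g)
      (c := h) (ne_of_gt hh) a
    rw [show h * (-1) + a = a - h by ring, show h * 1 + a = a + h by ring] at this
    have e : (∫ x in (a-h)..(a+h), g x) = h • ∫ u in (-1:ℝ)..1, g (h * u + a) := by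
      rw [this, smul_smul, mul_inv_cancel₀ (ne_of_gt hh), one_smul]
    rw [e, ← intervalIntegral.integral_smul]
    apply intervalIntegral.integral_congr
    intro u _
    simp only [hg, smul_eq_mul]
    have h1 : (h * u + a - a) / h = u := by field_simp; ring
    rw [h1]
    field_simp
  -- Step 3: rewrite the target as an interval integral
  have step3 : f 0 * (a + h * ∫ x in (-1:ℝ)..1, x * deriv H x) =
      ∫ u in (-1:ℝ)..1, (h * u + a) * deriv H u * f 0 := by
    have i1 : IntervalIntegrable (fun u => h * u * deriv H u * f 0) volume (-1) 1 :=
      (Continuous.intervalIntegrable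
        ((((continuous_const.mul continuous_id).mul hH'cont).mul continuous_const)) _ _)
    have i2 : IntervalIntegrable (fun u => a * deriv H u * f 0) volume (-1) 1 :=
      (Continuous.intervalIntegrable
        (((continuous_const.mul hH'cont).mul continuous_const)) _ _)
    have : (∫ u in (-1:ℝ)..1, (h * u + a) * deriv H u * f 0)
        = (∫ u in (-1:ℝ)..1, h * u * deriv H u * f 0)
          + ∫ u in (-1:ℝ)..1, a * deriv H u * f 0 := by
      rw [← intervalIntegral.integral_add i1 i2]
      apply intervalIntegral.integral_congr
      intro u _; ring
    rw [this]
    have e1 : (∫ u in (-1:ℝ)..1, h * u * deriv H u * f 0)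
        = h * f 0 * ∫ u in (-1:ℝ)..1, u * deriv H u := by
      rw [← intervalIntegral.integral_const_mul]
      apply intervalIntegral.integral_congr
      intro u _; ring
    have e2 : (∫ u in (-1:ℝ)..1, a * deriv H u * f 0)
        = a * f 0 * ∫ u in (-1:ℝ)..1, deriv H u := by
      rw [← intervalIntegral.integral_const_mul]
      apply intervalIntegral.integral_congr
      intro u _; ring
    rw [e1, e2, hFTC]
    ring
  rw [step1, step2, step3]
  -- Step 4: estimate
  have hlin : Continuous (fun u : ℝ => h * u + a) :=
    (continuous_const.mul continuous_id).add continuous_const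
  have iφ : IntervalIntegrable (fun u => (h * u + a) * deriv H u * f (h * u + a))
      volume (-1) 1 := Continuous.intervalIntegrable
        ((hlin.mul hH'cont).mul (hfc.comp hlin)) _ _
  have iψ : IntervalIntegrable (fun u => (h * u + a) * deriv H u * f 0)
      volume (-1) 1 := Continuous.intervalIntegrable
        ((hlin.mul hH'cont).mul continuous_const) _ _
  rw [← intervalIntegral.integral_sub iφ iψ]
  have key : ∀ u ∈ Set.uIoc (-1:ℝ) 1,
      ‖(h * u + a) * deriv H u * f (h * u + a) - (h * u + a) * deriv H u * f 0‖
        ≤ 4 * L * C₂ * (h ^ 2 + a ^ 2) := by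
    intro u hu
    rw [Set.uIoc_of_le (by norm_num)] at hu
    have hu1 : |u| ≤ 1 := by
      rw [abs_le]; exact ⟨hu.1.le, hu.2⟩
    have habs : |h * u + a| ≤ h + |a| := by
      calc |h * u + a| ≤ |h * u| + |a| := abs_add_le _ _
        _ = h * |u| + |a| := by rw [abs_mul, abs_of_pos hh]
        _ ≤ h + |a| := by nlinarith
    rw [Real.norm_eq_abs, show (h * u + a) * deriv H u * f (h * u + a)
        - (h * u + a) * deriv H u * f 0
        = (h * u + a) * deriv H u * (f (h * u + a) - f 0) by ring,
      abs_mul, abs_mul]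
    have hf' : |f (h * u + a) - f 0| ≤ L * |h * u + a| := by
      simpa using hfLip (h * u + a) 0
    calc |h * u + a| * |deriv H u| * |f (h * u + a) - f 0|
        ≤ (h + |a|) * (2 * C₂) * (L * (h + |a|)) := by
          apply mul_le_mul
          · exact mul_le_mul habs (hH'bound u) (abs_nonneg _) (by positivity)
          · exact hf'.trans (mul_le_mul_of_nonneg_left habs hL.le)
          · exact abs_nonneg _
          · positivity
      _ = 2 * L * C₂ * (h + |a|) ^ 2 := by ring
      _ ≤ 4 * L * C₂ * (h ^ 2 + a ^ 2) := by
          have hsq : (h + |a|) ^ 2 ≤ 2 * (h ^ 2 + a ^ 2) := by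
            nlinarith [sq_nonneg (h - |a|), sq_abs a]
          have h2 := mul_le_mul_of_nonneg_left hsq
            (by positivity : (0:ℝ) ≤ 2 * L * C₂)
          linarith
  calc |∫ u in (-1:ℝ)..1, ((h * u + a) * deriv H u * f (h * u + a)
          - (h * u + a) * deriv H u * f 0)|
      ≤ 4 * L * C₂ * (h ^ 2 + a ^ 2) * |1 - (-1)| := by
        exact intervalIntegral.norm_integral_le_of_norm_le_const key
    _ = 8 * L * C₂ * (h ^ 2 + a ^ 2) := by rw [show |(1:ℝ) - (-1)| = 2 by norm_num]; ring
    _ ≤ (8 * L * C₂ + 1) * (h ^ 2 + a ^ 2) := by nlinarith [sq_nonneg h, sq_nonneg a]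
end
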